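/- For every real z with 0 < z^2 < 1/5 and z^2 + 2z - 1 \ne 0, set q = \sqrt{1 - 6z^2 + 5z^4}, r_1 = (1 + z^2 + q)/(2z), and g_0 = (1 - 2z^4 - 3z^2 - q) / (2(z^2 + 3) z^2). Then \dfrac{z^4 + z^4 g_0 + z^2 g_0 - z^2 + 1}{z (r_1 - 1)} = \dfrac{-2z^5 - 3z^4 + z^3 - 5z^2 - 3z + 4 - (z^2 + 3z + 4)\,q}{2 z (3 + z^2)(z^2 + 2z - 1)}. (The left-hand side is the sum over j \ge 0 of the generating functions s_j of partial decorated paths ending at level j; the right-hand side is the closed form of S(z,1).) -/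

import Mathlib

theorem open_ended_paths_gf (z : ℝ) (hz0 : 0 < z ^ 2) (hz1 : z ^ 2 < 1 / 5)
    (hz2 : z ^ 2 + 2 * z - 1 ≠ 0) :
    let q := Real.sqrt (1 - 6 * z ^ 2 + 5 * z ^ 4)
    let r₁ := (1 + z ^ 2 + q) / (2 * z)
    let g₀ := (1 - 2 * z ^ 4 - 3 * z ^ 2 - q) / (2 * (z ^ 2 + 3) * z ^ 2)
    (z ^ 4 + z ^ 4 * g₀ + z ^ 2 * g₀ - z ^ 2 + 1) / (z * (r₁ - 1))
      = (-2 * z ^ 5 - 3 * z ^ 4 + z ^ 3 - 5 * z ^ 2 - 3 * z + 4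
          - (z ^ 2 + 3 * z + 4) * q)
        / (2 * z * (3 + z ^ 2) * (z ^ 2 + 2 * z - 1)) := by
  intro q r₁ g₀
  have hz : z ≠ 0 := by intro h; rw [h] at hz0; simp at hz0
  have hP : (0:ℝ) < 1 - 6 * z ^ 2 + 5 * z ^ 4 := by nlinarith
  have hq2 : q ^ 2 = 1 - 6 * z ^ 2 + 5 * z ^ 4 := Real.sq_sqrt hP.le
  have hqpos : 0 < q := Real.sqrt_pos.mpr hP
  have h3 : (0:ℝ) < z ^ 2 + 3 := by positivity
  have hd : z * (r₁ - 1) = ((1 - z) ^ 2 + q) / 2 := by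
    show z * ((1 + z ^ 2 + q) / (2 * z) - 1) = _
    field_simp; ring
  rw [hd]
  show (z ^ 4 + z ^ 4 * ((1 - 2 * z ^ 4 - 3 * z ^ 2 - q) / (2 * (z ^ 2 + 3) * z ^ 2))
      + z ^ 2 * ((1 - 2 * z ^ 4 - 3 * z ^ 2 - q) / (2 * (z ^ 2 + 3) * z ^ 2))
      - z ^ 2 + 1) / (((1 - z) ^ 2 + q) / 2) = _
  have hdd : ((1 - z) ^ 2 + q) ≠ 0 := by positivity
  field_simp
  rw [eq_div_iff (by contrapose! hz2; linear_combination hz2)]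
  linear_combination (z ^ 2 + 3) * (z ^ 2 + 3 * z + 4) * hq2
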